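/- Let K be a characteristic zero field, n, m ≥ 2, and let p, q ∈ K[x] be monic of degrees n and m with m p' q − n p q' = λ̃ ∈ K^×, and suppose m = nk for some k ∈ ℕ. Setting q̄ := q − p^k, one has m p' q̄ − n p q̄' = λ̃; moreover if q̄ = a_r x^r + lower terms with a_r ≠ 0 and 0 ≤ r < m, the leading term of m p' q̄ − n p q̄' is n a_r (m − r) x^{n+r-1}, contradicting n + r − 1 > 0; hence no such pair (p,q) exists. -/

import Mathlib

open Polynomial

/-- Let `n, m ≥ 2`, `p, q` monic of degrees `n, m` with
`m p' q − n p q' = λ̃ ∈ K^×` and `m = nk`.  Setting `q̄ := q − p^k` one has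
`m p' q̄ − n p q̄' = λ̃`; moreover if `q̄ ≠ 0` with `q̄ = a_r x^r + lower`,
`0 ≤ r < m`, `a_r ≠ 0`, the leading term of `m p' q̄ − n p q̄'` is
`n a_r (m − r) x^{n+r−1}`, contradicting `n + r − 1 > 0`; hence no such pair
`(p,q)` exists. -/
theorem statement19 (K : Type*) [Field K] [CharZero K] (n m k : ℕ)
    (hn : 2 ≤ n) (hm : 2 ≤ m) (hk : m = n * k)
    (p q : Polynomial K) (hp : p.Monic) (hq : q.Monic)
    (hpn : p.natDegree = n) (hqm : q.natDegree = m)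
    (lamt : K) (hlamt : lamt ≠ 0)
    (heq : (m : Polynomial K) * p.derivative * q - (n : Polynomial K) * p * q.derivative =
      Polynomial.C lamt) :
    ((m : Polynomial K) * p.derivative * (q - p ^ k) -
        (n : Polynomial K) * p * (q - p ^ k).derivative = Polynomial.C lamt) ∧
    (∀ r : ℕ, (q - p ^ k) ≠ 0 → (q - p ^ k).natDegree = r → r < m →
      ((m : Polynomial K) * p.derivative * (q - p ^ k) -
          (n : Polynomial K) * p * (q - p ^ k).derivative).natDegree = n + r - 1 ∧
      ((m : Polynomial K) * p.derivative * (q - p ^ k) -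
          (n : Polynomial K) * p * (q - p ^ k).derivative).leadingCoeff =
        (n : K) * (q - p ^ k).leadingCoeff * ((m : K) - (r : K))) ∧
    False := by
  have hk0 : k ≠ 0 := by rintro rfl; omega
  have hppow : p * p ^ (k - 1) = p ^ k := by
    rw [← pow_succ']
    congr 1
    omega
  -- Part 1: the equation is preserved
  have h1 : (m : Polynomial K) * p.derivative * (q - p ^ k) -
      (n : Polynomial K) * p * (q - p ^ k).derivative = Polynomial.C lamt := by
    rw [← heq, derivative_sub, derivative_pow, ← hppow]
    simp only [map_natCast]
    push_cast [hk]
    ring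
  -- the difference is nonzero
  have hqbne : q - p ^ k ≠ 0 := by
    intro h
    rw [h] at h1
    simp only [mul_zero, derivative_zero, sub_zero] at h1
    exact hlamt (by simpa using h1.symm)
  set qb := q - p ^ k with hqbdef
  set r := qb.natDegree with hrdef
  have hpk : (p ^ k).natDegree = m := by
    rw [natDegree_pow, hpn, hk, mul_comm]
  -- r < m
  have hcoeffm : qb.coeff m = 0 := by
    rw [hqbdef, coeff_sub]
    have e1 : q.coeff m = 1 := by rw [← hqm]; exact hq.coeff_natDegree
    have e2 : (p ^ k).coeff m = 1 := by rw [← hpk]; exact (hp.pow k).coeff_natDegree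
    rw [e1, e2, sub_self]
  have hle : r ≤ m := le_trans (natDegree_sub_le _ _) (by simp [hqm, hpk])
  have hr : r < m := by
    rcases lt_or_eq_of_le hle with h | h
    · exact h
    · exact absurd (leadingCoeff_eq_zero.mp (by rw [leadingCoeff, ← hrdef, h]; exact hcoeffm)) hqbne
  have ha : qb.leadingCoeff ≠ 0 := leadingCoeff_ne_zero.mpr hqbne
  set a := qb.leadingCoeff with hadef
  -- coefficient computation at degree n + r - 1
  have hN1 : (n - 1) + r = n + r - 1 := by omega
  have hc1 : ((m : Polynomial K) * p.derivative * qb).coeff (n + r - 1) = (m : K) * ((n : K) * a) := by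
    rw [mul_assoc, coeff_natCast_mul, ← hN1,
      coeff_mul_add_eq_of_natDegree_le ((natDegree_derivative_le p).trans (by omega)) le_rfl,
      coeff_derivative]
    have : n - 1 + 1 = n := by omega
    rw [this]
    have e1 : p.coeff n = 1 := by rw [← hpn]; exact hp.coeff_natDegree
    rw [e1, coeff_natDegree, ← hadef, Nat.cast_sub (by omega : 1 ≤ n)]
    push_cast
    ring
  have hc2 : ((n : Polynomial K) * p * qb.derivative).coeff (n + r - 1) = (n : K) * ((r : K) * a) := by
    rw [mul_assoc, coeff_natCast_mul]
    rcases Nat.eq_zero_or_pos r with h0 | hpos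
    · have : qb.derivative = 0 := by
        rw [eq_C_of_natDegree_eq_zero (hrdef ▸ h0 : qb.natDegree = 0), derivative_C]
      rw [this, mul_zero, coeff_zero, h0]
      push_cast; ring
    · have hN2 : n + (r - 1) = n + r - 1 := by omega
      rw [← hN2, coeff_mul_add_eq_of_natDegree_le (le_of_eq hpn)
        ((natDegree_derivative_le qb).trans (by omega)), coeff_derivative]
      have : r - 1 + 1 = r := by omega
      rw [this]
      have e1 : p.coeff n = 1 := by rw [← hpn]; exact hp.coeff_natDegree
      rw [e1, coeff_natDegree, ← hadef, Nat.cast_sub (by omega : 1 ≤ r)]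
      push_cast
      ring
  have hccontr : (m : K) * ((n : K) * a) - (n : K) * ((r : K) * a) = 0 := by
    have := congrArg (fun f => f.coeff (n + r - 1)) h1
    simp only [coeff_sub, hc1, hc2] at this
    rw [this, coeff_C, if_neg (by omega)]
  exfalso
  have hn0 : (n : K) ≠ 0 := Nat.cast_ne_zero.mpr (by omega)
  have key : (n : K) * a * ((m : K) - (r : K)) = 0 := by linear_combination hccontr
  rcases mul_eq_zero.mp key with h | h
  · rcases mul_eq_zero.mp h with h' | h'
    · exact hn0 h'
    · exact ha h'
  · have : (m : K) = (r : K) := sub_eq_zero.mp h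
    exact absurd (Nat.cast_injective this) (by omega)
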